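/- arXiv:2508.13802 — 2 statements merged into one kernel-verified Lean document; each statement's English description precedes it below -/
import Mathlib

section
/- For the product of exponentials f(q) = exp(Y₁q₁)·…·exp(Yₙqₙ) with joint screws Sᵢ(q) = Ad_{gᵢ(q)} Yᵢ, where gᵢ(q) = exp(Y₁q₁)·…·exp(Yᵢqᵢ), the partial derivative satisfies ∂Sᵢ/∂q_j = [S_j, Sᵢ] (the matrix commutator / Lie bracket) for j < i, and ∂Sᵢ/∂q_j = 0 for j ≥ i. -/
/-- Partial derivative of a scalar function on `ℝⁿ` with respect to the `j`-th coordinate. -/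
noncomputable def partialDeriv {n : ℕ} (j : Fin n) (F : (Fin n → ℝ) → ℝ)
    (q : Fin n → ℝ) : ℝ :=
  deriv (fun s => F (Function.update q j s)) (q j)

/-- `gᵢ(q) = exp(Y₁q₁)⋯exp(Yᵢqᵢ)` (0-indexed, `i` inclusive). -/
noncomputable def poePartial {m n : ℕ} (Y : Fin n → Matrix (Fin m) (Fin m) ℝ)
    (i : Fin n) (q : Fin n → ℝ) : Matrix (Fin m) (Fin m) ℝ :=
  ((List.ofFn fun j : Fin n => NormedSpace.exp (q j • Y j)).take ((i : ℕ) + 1)).prod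

/-- The instantaneous joint screw `Sᵢ(q) = Ad_{gᵢ(q)} Yᵢ = gᵢ(q)·Yᵢ·gᵢ(q)⁻¹`. -/
noncomputable def poeScrew {m n : ℕ} (Y : Fin n → Matrix (Fin m) (Fin m) ℝ)
    (i : Fin n) (q : Fin n → ℝ) : Matrix (Fin m) (Fin m) ℝ :=
  poePartial Y i q * Y i * (poePartial Y i q)⁻¹

namespace PoEAux

variable {m n : ℕ}

/-- `G Y q t = exp(q₀ • Y₀)⋯exp(q_{t-1} • Y_{t-1})`, product of the first `t` factors. -/
noncomputable def G (Y : Fin n → Matrix (Fin m) (Fin m) ℝ) (q : Fin n → ℝ) (t : ℕ) :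
    Matrix (Fin m) (Fin m) ℝ :=
  ((List.ofFn fun k : Fin n => NormedSpace.exp (q k • Y k)).take t).prod

lemma G_zero (Y : Fin n → Matrix (Fin m) (Fin m) ℝ) (q : Fin n → ℝ) : G Y q 0 = 1 := by
  simp [G]

lemma G_succ (Y : Fin n → Matrix (Fin m) (Fin m) ℝ) (q : Fin n → ℝ) {t : ℕ} (ht : t < n) :
    G Y q (t + 1) = G Y q t * NormedSpace.exp (q ⟨t, ht⟩ • Y ⟨t, ht⟩) := by
  unfold G
  rw [List.prod_take_succ _ _ (by simpa using ht)]
  congr 1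
  simp

lemma G_succ_ge (Y : Fin n → Matrix (Fin m) (Fin m) ℝ) (q : Fin n → ℝ) {t : ℕ} (ht : n ≤ t) :
    G Y q (t + 1) = G Y q t := by
  unfold G
  rw [List.take_of_length_le (by simpa using Nat.le_succ_of_le ht),
    List.take_of_length_le (by simpa using ht)]

lemma isUnit_G (Y : Fin n → Matrix (Fin m) (Fin m) ℝ) (q : Fin n → ℝ) (t : ℕ) :
    IsUnit (G Y q t) := by
  induction t with
  | zero => simp [G_zero]
  | succ t ih =>
    rcases lt_or_ge t n with h | h
    · rw [G_succ Y q h]; exact ih.mul (Matrix.isUnit_exp _)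
    · rwa [G_succ_ge Y q h]

lemma G_congr (Y : Fin n → Matrix (Fin m) (Fin m) ℝ) {q q' : Fin n → ℝ} (t : ℕ)
    (h : ∀ k : Fin n, (k : ℕ) < t → q k = q' k) : G Y q t = G Y q' t := by
  induction t with
  | zero => simp [G_zero]
  | succ t ih =>
    have ih' := ih fun k hk => h k (Nat.lt_succ_of_lt hk)
    rcases lt_or_ge t n with hlt | hge
    · rw [G_succ Y q hlt, G_succ Y q' hlt, ih', h ⟨t, hlt⟩ (Nat.lt_succ_self t)]
    · rw [G_succ_ge Y q hge, G_succ_ge Y q' hge, ih']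

lemma inv_mul_cancel_l {A : Matrix (Fin m) (Fin m) ℝ} (h : IsUnit A)
    (M : Matrix (Fin m) (Fin m) ℝ) : A⁻¹ * (A * M) = M := by
  rw [← mul_assoc, Matrix.nonsing_inv_mul _ ((Matrix.isUnit_iff_isUnit_det A).mp h), one_mul]

/-- Factorization of `G` at an updated coordinate. -/
lemma G_update (Y : Fin n → Matrix (Fin m) (Fin m) ℝ) (q : Fin n → ℝ) (j : Fin n) (s : ℝ)
    {t : ℕ} (hjt : (j : ℕ) < t) :
    G Y (Function.update q j s) t =
      G Y q (j : ℕ) * NormedSpace.exp (s • Y j) *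
        ((G Y q ((j : ℕ) + 1))⁻¹ * G Y q t) := by
  induction t, hjt using Nat.le_induction with
  | base =>
    have hj : (j : ℕ) < n := j.isLt
    rw [G_succ _ _ hj, G_succ _ _ hj]
    have h1 : G Y (Function.update q j s) (j : ℕ) = G Y q (j : ℕ) :=
      G_congr Y _ fun k hk =>
        Function.update_of_ne (by exact fun h => absurd (h ▸ hk) (lt_irrefl _)) _ _
    have h2 : (⟨(j : ℕ), hj⟩ : Fin n) = j := Fin.eta j hj
    rw [h1, h2, Function.update_self]
    have hu : IsUnit (G Y q ((j : ℕ) + 1)) := isUnit_G Y q _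
    rw [G_succ Y q hj, h2] at hu
    rw [Matrix.nonsing_inv_mul _ ((Matrix.isUnit_iff_isUnit_det _).mp hu), mul_one]
  | succ t ht ih =>
    rcases lt_or_ge t n with hlt | hge
    · have hne : (⟨t, hlt⟩ : Fin n) ≠ j := Fin.ne_of_val_ne (show t ≠ (j : ℕ) by omega)
      rw [G_succ _ _ hlt, G_succ _ _ hlt, ih, Function.update_of_ne hne]
      simp [mul_assoc]
    · rw [G_succ_ge _ _ hge, G_succ_ge _ _ hge, ih]

/-- Since `exp(qᵢ • Yᵢ)` commutes with `Yᵢ`, the last factor drops out of the conjugation. -/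
lemma screw_eq (Y : Fin n → Matrix (Fin m) (Fin m) ℝ) (q : Fin n → ℝ) (i : Fin n) :
    poeScrew Y i q = G Y q (i : ℕ) * Y i * (G Y q (i : ℕ))⁻¹ := by
  have hp : poePartial Y i q = G Y q (i : ℕ) * NormedSpace.exp (q i • Y i) := by
    have h := G_succ Y q i.isLt
    rw [Fin.eta] at h
    exact h
  have hc : Commute (NormedSpace.exp (q i • Y i)) (Y i) :=
    ((Commute.refl (Y i)).smul_left (q i)).exp_left
  have hcu : IsUnit (NormedSpace.exp (q i • Y i)) := Matrix.isUnit_exp _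
  rw [poeScrew, hp, Matrix.mul_inv_rev]
  calc G Y q (i:ℕ) * NormedSpace.exp (q i • Y i) * Y i *
        ((NormedSpace.exp (q i • Y i))⁻¹ * (G Y q (i:ℕ))⁻¹)
      = G Y q (i:ℕ) * (Y i * (NormedSpace.exp (q i • Y i) *
        (NormedSpace.exp (q i • Y i))⁻¹)) * (G Y q (i:ℕ))⁻¹ := by
        rw [mul_assoc (G Y q (i:ℕ)), hc.eq]; noncomm_ring
    _ = G Y q (i:ℕ) * Y i * (G Y q (i:ℕ))⁻¹ := by
        rw [Matrix.mul_nonsing_inv _ ((Matrix.isUnit_iff_isUnit_det _).mp hcu), mul_one]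

lemma entry_hasDerivAt_conj (A X K A' : Matrix (Fin m) (Fin m) ℝ) (t : ℝ) (a b : Fin m) :
    HasDerivAt
      (fun s : ℝ =>
        (A * (NormedSpace.exp (s • X) * (K * NormedSpace.exp (s • (-X)))) * A') a b)
      ((A * ((NormedSpace.exp (t • X) * X) * (K * NormedSpace.exp (t • (-X))) +
        NormedSpace.exp (t • X) * (K * (NormedSpace.exp (t • (-X)) * (-X)))) * A') a b) t := by
  letI : SeminormedRing (Matrix (Fin m) (Fin m) ℝ) := Matrix.linftyOpSemiNormedRing
  letI : NormedRing (Matrix (Fin m) (Fin m) ℝ) := Matrix.linftyOpNormedRing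
  letI : NormedAlgebra ℝ (Matrix (Fin m) (Fin m) ℝ) := Matrix.linftyOpNormedAlgebra
  have h1 : HasDerivAt (fun s : ℝ => NormedSpace.exp (s • X))
      (NormedSpace.exp (t • X) * X) t := hasDerivAt_exp_smul_const X t
  have h2 : HasDerivAt (fun s : ℝ => NormedSpace.exp (s • (-X)))
      (NormedSpace.exp (t • (-X)) * (-X)) t := hasDerivAt_exp_smul_const (-X) t
  have hφ := ((h1.mul (h2.const_mul K)).const_mul A).mul_const A'
  let e : Matrix (Fin m) (Fin m) ℝ →ₗ[ℝ] ℝ :=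
    (LinearMap.proj b).comp (LinearMap.proj (R := ℝ) (φ := fun _ : Fin m => Fin m → ℝ) a)
  exact (e.toContinuousLinearMap.hasFDerivAt).comp_hasDerivAt t hφ

lemma conj_form (A R Yi X : Matrix (Fin m) (Fin m) ℝ) (s : ℝ) :
    A * NormedSpace.exp (s • X) * R * Yi * (A * NormedSpace.exp (s • X) * R)⁻¹ =
      A * (NormedSpace.exp (s • X) *
        ((R * Yi * R⁻¹) * NormedSpace.exp (s • (-X)))) * A⁻¹ := by
  rw [show NormedSpace.exp (s • (-X)) = (NormedSpace.exp (s • X))⁻¹ by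
    rw [smul_neg, Matrix.exp_neg]]
  rw [Matrix.mul_inv_rev, Matrix.mul_inv_rev]
  simp only [mul_assoc]

lemma bracket_form (A R X Yi c : Matrix (Fin m) (Fin m) ℝ) (hA : IsUnit A)
    (hcomm : c * X = X * c) :
    A * ((c * X) * ((R * Yi * R⁻¹) * c⁻¹) + c * ((R * Yi * R⁻¹) * (c⁻¹ * (-X)))) * A⁻¹ =
      (A * X * A⁻¹) * (A * c * R * Yi * (A * c * R)⁻¹) -
        (A * c * R * Yi * (A * c * R)⁻¹) * (A * X * A⁻¹) := by
  have hcancelA : ∀ Z, A⁻¹ * (A * Z) = Z := inv_mul_cancel_l hA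
  have hswap : ∀ Z : Matrix (Fin m) (Fin m) ℝ, X * (c * Z) = c * (X * Z) := fun Z => by
    rw [← mul_assoc, ← hcomm, mul_assoc]
  simp only [Matrix.mul_inv_rev, mul_add, add_mul, mul_neg, neg_mul, mul_sub, sub_mul,
    mul_assoc, hcancelA, hswap, ← sub_eq_add_neg]

end PoEAux

open PoEAux in
/-- `∂Sᵢ/∂q_j = [S_j, Sᵢ]` for `j < i`, and `∂Sᵢ/∂q_j = 0` for `j ≥ i`
(entrywise partial derivatives). -/
theorem poeScrew_partialDeriv {m n : ℕ}
    (Y : Fin n → Matrix (Fin m) (Fin m) ℝ) (i j : Fin n) (q : Fin n → ℝ) :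
    (j < i →
      (Matrix.of fun a b => partialDeriv j (fun p => poeScrew Y i p a b) q) =
        poeScrew Y j q * poeScrew Y i q - poeScrew Y i q * poeScrew Y j q) ∧
    (i ≤ j →
      (Matrix.of fun a b => partialDeriv j (fun p => poeScrew Y i p a b) q) = 0) := by
  constructor
  · -- `j < i`
    intro hji
    have hGu : ∀ s : ℝ, G Y (Function.update q j s) (i : ℕ) =
        G Y q (j : ℕ) * NormedSpace.exp (s • Y j) *
          ((G Y q ((j : ℕ) + 1))⁻¹ * G Y q (i : ℕ)) := fun s =>
      G_update Y q j s (by exact_mod_cast hji)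
    have hM : G Y q (i : ℕ) =
        G Y q (j : ℕ) * NormedSpace.exp (q j • Y j) *
          ((G Y q ((j : ℕ) + 1))⁻¹ * G Y q (i : ℕ)) := by
      have h := hGu (q j)
      rwa [Function.update_eq_self] at h
    have hscrew : ∀ s : ℝ, poeScrew Y i (Function.update q j s) =
        G Y q (j : ℕ) * (NormedSpace.exp (s • Y j) *
          ((((G Y q ((j : ℕ) + 1))⁻¹ * G Y q (i : ℕ)) * Y i *
              ((G Y q ((j : ℕ) + 1))⁻¹ * G Y q (i : ℕ))⁻¹) *
            NormedSpace.exp (s • (-(Y j))))) * (G Y q (j : ℕ))⁻¹ := fun s => by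
      rw [screw_eq, hGu s, conj_form]
    ext a b
    rw [Matrix.of_apply]
    show partialDeriv j (fun p => poeScrew Y i p a b) q = _
    rw [partialDeriv]
    have hfun : (fun s => poeScrew Y i (Function.update q j s) a b) = fun s : ℝ =>
        (G Y q (j : ℕ) * (NormedSpace.exp (s • Y j) *
          ((((G Y q ((j : ℕ) + 1))⁻¹ * G Y q (i : ℕ)) * Y i *
              ((G Y q ((j : ℕ) + 1))⁻¹ * G Y q (i : ℕ))⁻¹) *
            NormedSpace.exp (s • (-(Y j))))) * (G Y q (j : ℕ))⁻¹) a b :=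
      funext fun s => by rw [hscrew s]
    rw [hfun, (entry_hasDerivAt_conj (G Y q (j : ℕ)) (Y j)
      (((G Y q ((j : ℕ) + 1))⁻¹ * G Y q (i : ℕ)) * Y i *
        ((G Y q ((j : ℕ) + 1))⁻¹ * G Y q (i : ℕ))⁻¹) (G Y q (j : ℕ))⁻¹ (q j) a b).deriv]
    have hfinal : G Y q (j : ℕ) * ((NormedSpace.exp (q j • Y j) * Y j) *
          ((((G Y q ((j : ℕ) + 1))⁻¹ * G Y q (i : ℕ)) * Y i *
              ((G Y q ((j : ℕ) + 1))⁻¹ * G Y q (i : ℕ))⁻¹) *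
            NormedSpace.exp (q j • (-(Y j)))) +
          NormedSpace.exp (q j • Y j) *
            ((((G Y q ((j : ℕ) + 1))⁻¹ * G Y q (i : ℕ)) * Y i *
              ((G Y q ((j : ℕ) + 1))⁻¹ * G Y q (i : ℕ))⁻¹) *
              (NormedSpace.exp (q j • (-(Y j))) * (-(Y j))))) * (G Y q (j : ℕ))⁻¹ =
        poeScrew Y j q * poeScrew Y i q - poeScrew Y i q * poeScrew Y j q := by
      rw [show NormedSpace.exp (q j • (-(Y j))) = (NormedSpace.exp (q j • Y j))⁻¹ by
        rw [smul_neg, Matrix.exp_neg]]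
      rw [bracket_form _ _ _ _ _ (isUnit_G Y q _)
        (((Commute.refl (Y j)).smul_left (q j)).exp_left).eq]
      rw [← hM, ← screw_eq, ← screw_eq]
    rw [hfinal]
  · -- `i ≤ j`
    intro hij
    have hconst : ∀ s : ℝ, poeScrew Y i (Function.update q j s) = poeScrew Y i q := by
      intro s
      rw [screw_eq, screw_eq]
      have hG : G Y (Function.update q j s) (i : ℕ) = G Y q (i : ℕ) :=
        G_congr Y _ fun k hk =>
          Function.update_of_ne (Fin.ne_of_val_ne (by omega : (k : ℕ) ≠ (j : ℕ))) _ _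
      rw [hG]
    ext a b
    rw [Matrix.of_apply, Matrix.zero_apply]
    show partialDeriv j (fun p => poeScrew Y i p a b) q = 0
    rw [partialDeriv]
    have h : (fun s => poeScrew Y i (Function.update q j s) a b) =
        fun _ : ℝ => poeScrew Y i q a b := funext fun s => by rw [hconst s]
    rw [h, deriv_const]
end

section
/- With Sᵢ(q) = Ad_{gᵢ(q)} Yᵢ as above, the iterated partial derivative for indices α₁,…,α_ν all less than i satisfies ∂^ν Sᵢ / (∂q_{α₁} ⋯ ∂q_{α_ν}) = ad_{S_{β_ν}} ad_{S_{β_{ν-1}}} ⋯ ad_{S_{β₁}} Sᵢ, where β_ν ≤ β_{ν-1} ≤ … ≤ β₁ < i is the decreasing rearrangement of {α₁,…,α_ν} and ad_A B = [A,B]; the derivative vanishes whenever some α_j ≥ i. -/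
/-- Iterated partial derivative along a list of coordinate indices. -/
noncomputable def partialDerivSeq {n : ℕ} :
    List (Fin n) → ((Fin n → ℝ) → ℝ) → ((Fin n → ℝ) → ℝ)
  | [], F => F
  | j :: rest, F => partialDeriv j (partialDerivSeq rest F)

/-- Nested adjoint: `nestedAd [A₁, …, A_ν] X = ad_{A₁} (ad_{A₂} ⋯ (ad_{A_ν} X))`,
with `ad_A B = A·B − B·A`. -/
def nestedAd {m : ℕ} (l : List (Matrix (Fin m) (Fin m) ℝ))
    (X : Matrix (Fin m) (Fin m) ℝ) : Matrix (Fin m) (Fin m) ℝ :=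
  l.foldr (fun A B => A * B - B * A) X


open NormedSpace Function

section
attribute [local instance] Matrix.linftyOpNormedRing Matrix.linftyOpNormedAlgebra

variable {m n : ℕ} (Y : Fin n → Matrix (Fin m) (Fin m) ℝ)





/-- Entrywise partial `HasDerivAt` for matrix-valued functions. -/
def HP (j : Fin n) (F : (Fin n → ℝ) → Matrix (Fin m) (Fin m) ℝ) (q : Fin n → ℝ)
    (M : Matrix (Fin m) (Fin m) ℝ) : Prop :=
  ∀ a b, HasDerivAt (fun s => F (Function.update q j s) a b) (M a b) (q j)

lemma HP.congr_value {j : Fin n} {F q M N} (h : HP (m := m) j F q M) (e : M = N) : HP j F q N :=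
  e ▸ h

lemma HP_const {j : Fin n} {F : (Fin n → ℝ) → Matrix (Fin m) (Fin m) ℝ} {q}
    (h : ∀ s, F (Function.update q j s) = F q) : HP j F q 0 := by
  intro a b
  have : (fun s => F (Function.update q j s) a b) = fun _ => F q a b := by
    funext s; rw [h s]
  rw [this]
  simpa using hasDerivAt_const (q j) (F q a b)

lemma HP.sub {j : Fin n} {F G : (Fin n → ℝ) → Matrix (Fin m) (Fin m) ℝ} {q M N}
    (hF : HP j F q M) (hG : HP j G q N) : HP j (fun p => F p - G p) q (M - N) := by
  intro a b
  simpa [Matrix.sub_apply] using (hF a b).fun_sub (hG a b)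

lemma HP.mul {j : Fin n} {F G : (Fin n → ℝ) → Matrix (Fin m) (Fin m) ℝ} {q M N}
    (hF : HP j F q M) (hG : HP j G q N) :
    HP j (fun p => F p * G p) q (M * G q + F q * N) := by
  intro a b
  have : ∀ s, (F (update q j s) * G (update q j s)) a b
      = ∑ c, F (update q j s) a c * G (update q j s) c b := fun s => Matrix.mul_apply
  simp only [HP]
  have h : HasDerivAt (fun s => ∑ c, F (update q j s) a c * G (update q j s) c b)
      (∑ c, (M a c * G q c b + F q a c * N c b)) (q j) := by
    refine HasDerivAt.fun_sum fun c _ => ?_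
    have := ((hF a c).fun_mul (hG c b))
    simpa [Function.update_self] using this
  have h2 : (fun s => (F (update q j s) * G (update q j s)) a b)
      = fun s => ∑ c, F (update q j s) a c * G (update q j s) c b := funext this
  rw [h2]
  convert h using 1
  simp [Matrix.add_apply, Matrix.mul_apply, Finset.sum_add_distrib]

lemma HP.deriv_eq {j : Fin n} {F : (Fin n → ℝ) → Matrix (Fin m) (Fin m) ℝ} {q M}
    (h : HP j F q M) (a b : Fin m) :
    deriv (fun s => F (Function.update q j s) a b) (q j) = M a b :=
  (h a b).deriv


noncomputable def pp (r : ℕ) (q : Fin n → ℝ) : Matrix (Fin m) (Fin m) ℝ :=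
  ((List.ofFn fun t => exp (q t • Y t)).take r).prod

noncomputable def qq (r : ℕ) (q : Fin n → ℝ) : Matrix (Fin m) (Fin m) ℝ :=
  (((List.ofFn fun t => exp (q t • (-Y t))).take r).reverse).prod

lemma take_ofFn_congr {β : Type*} (f g : Fin n → β) (r : ℕ)
    (h : ∀ t : Fin n, (t : ℕ) < r → f t = g t) :
    (List.ofFn f).take r = (List.ofFn g).take r := by
  apply List.ext_getElem
  · simp
  · intro i h1 h2
    simp only [List.getElem_take, List.getElem_ofFn]
    have : i < r ∧ i < n := by simpa using h1
    exact h _ this.1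

lemma pp_update_const (r : ℕ) (j : Fin n) (h : r ≤ (j : ℕ)) (q : Fin n → ℝ) (s : ℝ) :
    pp Y r (Function.update q j s) = pp Y r q := by
  unfold pp
  rw [take_ofFn_congr _ (fun t => exp (q t • Y t)) r]
  intro t ht
  rw [Function.update_of_ne]
  exact Fin.ne_of_lt (by omega)

lemma qq_update_const (r : ℕ) (j : Fin n) (h : r ≤ (j : ℕ)) (q : Fin n → ℝ) (s : ℝ) :
    qq Y r (Function.update q j s) = qq Y r q := by
  unfold qq
  rw [take_ofFn_congr _ (fun t => exp (q t • (-Y t))) r]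
  intro t ht
  rw [Function.update_of_ne]
  exact Fin.ne_of_lt (by omega)

lemma pp_succ (r : ℕ) (hr : r < n) (q : Fin n → ℝ) :
    pp Y (r + 1) q = pp Y r q * exp (q ⟨r, hr⟩ • Y ⟨r, hr⟩) := by
  unfold pp
  rw [List.prod_take_succ _ r (by simpa using hr)]
  congr 1
  simp

lemma qq_succ (r : ℕ) (hr : r < n) (q : Fin n → ℝ) :
    qq Y (r + 1) q = exp (q ⟨r, hr⟩ • (-Y ⟨r, hr⟩)) * qq Y r q := by
  unfold qq
  rw [List.take_succ, List.reverse_append, List.prod_append]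
  congr 1
  simp [List.getElem?_ofFn, hr]

lemma exp_mul_exp_neg (A : Matrix (Fin m) (Fin m) ℝ) (c : ℝ) :
    exp (c • A) * exp (c • (-A)) = 1 := by
  have h := exp_add_of_commute (Commute.neg_right (Commute.refl (c • A)))
  rw [add_neg_cancel, exp_zero] at h
  rw [smul_neg]; exact h.symm

lemma exp_neg_mul_exp (A : Matrix (Fin m) (Fin m) ℝ) (c : ℝ) :
    exp (c • (-A)) * exp (c • A) = 1 := by
  have h := exp_add_of_commute (Commute.neg_left (Commute.refl (c • A)))
  rw [neg_add_cancel, exp_zero] at h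
  rw [smul_neg]; exact h.symm

lemma qq_mul_pp (r : ℕ) (hr : r ≤ n) (q : Fin n → ℝ) : qq Y r q * pp Y r q = 1 := by
  induction r with
  | zero => simp [pp, qq]
  | succ r ih =>
    have h : r < n := hr
    rw [pp_succ Y r h, qq_succ Y r h, mul_assoc, ← mul_assoc (qq Y r q),
      ih (le_of_lt h)]
    rw [one_mul, exp_neg_mul_exp]

lemma pp_mul_qq (r : ℕ) (hr : r ≤ n) (q : Fin n → ℝ) : pp Y r q * qq Y r q = 1 := by
  induction r with
  | zero => simp [pp, qq]
  | succ r ih =>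
    have h : r < n := hr
    rw [pp_succ Y r h, qq_succ Y r h, mul_assoc, ← mul_assoc (exp (q ⟨r,h⟩ • Y ⟨r,h⟩)),
      exp_mul_exp_neg]
    simpa using ih (le_of_lt h)

lemma pp_inv (r : ℕ) (hr : r ≤ n) (q : Fin n → ℝ) : (pp Y r q)⁻¹ = qq Y r q :=
  Matrix.inv_eq_left_inv (qq_mul_pp Y r hr q)


/-- Entry evaluation as a continuous linear map. -/
noncomputable def entryCLM (a b : Fin m) : Matrix (Fin m) (Fin m) ℝ →L[ℝ] ℝ where
  toFun M := M a b
  map_add' M N := rfl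
  map_smul' c M := rfl
  cont := ((continuous_apply b).comp (continuous_apply a))

lemma hp_exp (j : Fin n) (A : Matrix (Fin m) (Fin m) ℝ) (q : Fin n → ℝ) (a b : Fin m) :
    HasDerivAt (fun s : ℝ => exp (s • A) a b) ((A * exp (q j • A)) a b) (q j) := by
  have h : HasDerivAt (fun s : ℝ => exp (s • A)) (A * exp (q j • A)) (q j) :=
    hasDerivAt_exp_smul_const' A (q j)
  exact ((entryCLM a b).hasFDerivAt.comp_hasDerivAt (q j) h)

/-- `Sd j q`: the screw written with explicit inverse. -/
noncomputable def Sd (j : Fin n) (q : Fin n → ℝ) : Matrix (Fin m) (Fin m) ℝ :=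
  pp Y ((j : ℕ) + 1) q * Y j * qq Y ((j : ℕ) + 1) q

lemma Sd_eq_poeScrew (j : Fin n) (q : Fin n → ℝ) : Sd Y j q = poeScrew Y j q := by
  have h1 : poePartial Y j q = pp Y ((j : ℕ) + 1) q := rfl
  rw [poeScrew, h1, Sd, pp_inv Y _ (by omega)]

lemma hp_pp (r : ℕ) (hr : r ≤ n) (j : Fin n) (hj : (j : ℕ) < r) (q : Fin n → ℝ) :
    HP j (pp Y r) q (Sd Y j q * pp Y r q) := by
  induction r with
  | zero => omega
  | succ r ih =>
    have hrn : r < n := hr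
    set ρ : Fin n := ⟨r, hrn⟩ with hρ
    have hpp : ∀ p, pp Y (r+1) p = pp Y r p * exp (p ρ • Y ρ) := pp_succ Y r hrn
    rcases lt_or_eq_of_le (Nat.lt_succ_iff.mp hj) with hlt | heq
    · -- j < r
      have hjρ : j ≠ ρ := Fin.ne_of_lt (by simpa [hρ, Fin.lt_def] using hlt)
      have hconst : HP j (fun p => exp (p ρ • Y ρ)) q 0 := by
        apply HP_const; intro s; rw [Function.update_of_ne (Ne.symm hjρ)]
      have := (ih (le_of_lt hrn) hlt).mul hconst
      intro a b
      have hfun : (fun s => pp Y (r+1) (update q j s) a b)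
          = fun s => ((pp Y r (update q j s)) * (exp ((update q j s) ρ • Y ρ))) a b := by
        funext s; rw [hpp]
      rw [hfun]
      have hval : Sd Y j q * pp Y r q * exp (q ρ • Y ρ) + pp Y r q * 0
          = Sd Y j q * pp Y (r+1) q := by
        rw [hpp]; noncomm_ring
      exact hval ▸ this a b
    · -- j = r
      have hjρ : j = ρ := Fin.ext heq
      have hpp' : ∀ p, pp Y (r+1) p = pp Y r p * exp (p j • Y j) := by
        intro p; rw [hjρ]; exact hpp p
      intro a b
      have hfun : (fun s => pp Y (r+1) (update q j s) a b)
          = fun s => ∑ c, pp Y r q a c * (exp (s • Y j)) c b := by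
        funext s
        rw [hpp', pp_update_const Y r j (le_of_eq heq.symm) q s, Matrix.mul_apply]
        simp only [Function.update_self]
      rw [hfun]
      have hd : HasDerivAt (fun s => ∑ c, pp Y r q a c * (exp (s • Y j)) c b)
          (∑ c, pp Y r q a c * ((Y j * exp (q j • Y j)) c b)) (q j) := by
        refine HasDerivAt.fun_sum fun c _ => ?_
        exact (hp_exp j (Y j) q c b).const_mul _
      convert hd using 1
      -- value equality
      have hSd : Sd Y j q * pp Y (r+1) q = pp Y r q * (Y j * exp (q j • Y j)) := by
        have hj1 : ((j:ℕ)+1) = r+1 := by omega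
        rw [Sd, hj1, mul_assoc, qq_mul_pp Y (r+1) hr q, mul_one, hpp']
        have hcomm : exp (q j • Y j) * Y j = Y j * exp (q j • Y j) :=
          (((Commute.refl (Y j)).smul_left (q j)).exp_left).eq
        rw [mul_assoc, hcomm, ← mul_assoc]
      rw [hSd, Matrix.mul_apply]

lemma hp_qq (r : ℕ) (hr : r ≤ n) (j : Fin n) (hj : (j : ℕ) < r) (q : Fin n → ℝ) :
    HP j (qq Y r) q (-(qq Y r q * Sd Y j q)) := by
  induction r with
  | zero => omega
  | succ r ih =>
    have hrn : r < n := hr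
    set ρ : Fin n := ⟨r, hrn⟩ with hρ
    have hqq : ∀ p, qq Y (r+1) p = exp (p ρ • (-Y ρ)) * qq Y r p := qq_succ Y r hrn
    rcases lt_or_eq_of_le (Nat.lt_succ_iff.mp hj) with hlt | heq
    · have hjρ : j ≠ ρ := Fin.ne_of_lt (by simpa [hρ, Fin.lt_def] using hlt)
      have hconst : HP j (fun p => exp (p ρ • (-Y ρ))) q 0 := by
        apply HP_const; intro s; rw [Function.update_of_ne (Ne.symm hjρ)]
      have := hconst.mul (ih (le_of_lt hrn) hlt)
      intro a b
      have hfun : (fun s => qq Y (r+1) (update q j s) a b)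
          = fun s => ((exp ((update q j s) ρ • (-Y ρ))) * qq Y r (update q j s)) a b := by
        funext s; rw [hqq]
      rw [hfun]
      have hval : (0 : Matrix (Fin m) (Fin m) ℝ) * qq Y r q
            + exp (q ρ • (-Y ρ)) * (-(qq Y r q * Sd Y j q))
          = -(qq Y (r+1) q * Sd Y j q) := by
        rw [hqq]; noncomm_ring
      exact hval ▸ this a b
    · have hjρ : j = ρ := Fin.ext heq
      have hqq' : ∀ p, qq Y (r+1) p = exp (p j • (-Y j)) * qq Y r p := by
        intro p; rw [hjρ]; exact hqq p
      intro a b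
      have hfun : (fun s => qq Y (r+1) (update q j s) a b)
          = fun s => ∑ c, (exp (s • (-Y j))) a c * qq Y r q c b := by
        funext s
        rw [hqq', qq_update_const Y r j (le_of_eq heq.symm) q s, Matrix.mul_apply]
        simp only [Function.update_self]
      rw [hfun]
      have hd : HasDerivAt (fun s => ∑ c, (exp (s • (-Y j))) a c * qq Y r q c b)
          (∑ c, (((-Y j) * exp (q j • (-Y j))) a c) * qq Y r q c b) (q j) := by
        refine HasDerivAt.fun_sum fun c _ => ?_
        exact (hp_exp j (-Y j) q a c).mul_const _
      convert hd using 1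
      have hSd : -(qq Y (r+1) q * Sd Y j q) = ((-Y j) * exp (q j • (-Y j))) * qq Y r q := by
        have hj1 : ((j:ℕ)+1) = r+1 := by omega
        have hone : qq Y (r+1) q * pp Y (r+1) q = 1 := qq_mul_pp Y (r+1) hr q
        rw [Sd, hj1, ← mul_assoc, ← mul_assoc, hone, one_mul, hqq']
        noncomm_ring
      rw [hSd, Matrix.mul_apply]


lemma nestedAd_nil (X : Matrix (Fin m) (Fin m) ℝ) : nestedAd [] X = X := rfl
lemma nestedAd_cons (A : Matrix (Fin m) (Fin m) ℝ) (l) (X) :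
    nestedAd (A :: l) X = A * nestedAd l X - nestedAd l X * A := rfl

lemma hp_screw_le (j k : Fin n) (h : j ≤ k) (q : Fin n → ℝ) :
    HP j (poeScrew Y k) q
      (poeScrew Y j q * poeScrew Y k q - poeScrew Y k q * poeScrew Y j q) := by
  have hfun : poeScrew Y k = fun p => pp Y ((k:ℕ)+1) p * Y k * qq Y ((k:ℕ)+1) p := by
    funext p; rw [← Sd_eq_poeScrew]; rfl
  rw [hfun]
  have hk1 : ((k:ℕ)+1) ≤ n := by omega
  have hjk : (j:ℕ) < (k:ℕ)+1 := by omega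
  have hY : HP j (fun _ => Y k) q 0 := HP_const (fun _ => rfl)
  have h1 := (hp_pp Y ((k:ℕ)+1) hk1 j hjk q).mul hY
  have h2 := h1.mul (hp_qq Y ((k:ℕ)+1) hk1 j hjk q)
  refine h2.congr_value ?_
  rw [← Sd_eq_poeScrew Y j q]
  show _ = Sd Y j q * Sd Y k q - Sd Y k q * Sd Y j q
  rw [Sd, Sd]
  noncomm_ring

lemma hp_screw_zero (j k : Fin n) (h : k ≤ j) (q : Fin n → ℝ) :
    HP j (poeScrew Y k) q 0 := by
  rcases lt_or_eq_of_le h with hlt | heq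
  · apply HP_const
    intro s
    have h1 : poePartial Y k (update q j s) = poePartial Y k q := by
      have := pp_update_const Y ((k:ℕ)+1) j (by omega) q s
      exact this
    rw [poeScrew, poeScrew, h1]
  · cases heq
    exact (hp_screw_le Y j j le_rfl q).congr_value (sub_self _)

lemma orderedInsert_of_forall_le {j : Fin n} {l : List (Fin n)} (h : ∀ x ∈ l, j ≤ x) :
    l.orderedInsert (· ≤ ·) j = j :: l := by
  cases l with
  | nil => rfl
  | cons b t => simp [List.orderedInsert, h b (by simp)]

lemma hp_nested_lt (i : Fin n) (l : List (Fin n)) (hsort : l.Pairwise (· ≤ ·))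
    (hl : ∀ x ∈ l, x < i) (j : Fin n) (hj : j < i) (q : Fin n → ℝ) :
    HP j (fun p => nestedAd (l.map fun t => poeScrew Y t p) (poeScrew Y i p)) q
      (nestedAd ((l.orderedInsert (· ≤ ·) j).map fun t => poeScrew Y t q)
        (poeScrew Y i q)) := by
  induction l with
  | nil =>
    simp only [List.map_nil, List.orderedInsert, List.map_cons, nestedAd_cons, nestedAd_nil]
    exact hp_screw_le Y j i (le_of_lt hj) q
  | cons a l' ih =>
    obtain ⟨hal', hsort'⟩ := List.pairwise_cons.mp hsort
    have hl' : ∀ x ∈ l', x < i := fun x hx => hl x (by simp [hx])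
    have hR := ih hsort' hl'
    set R : (Fin n → ℝ) → Matrix (Fin m) (Fin m) ℝ :=
      fun p => nestedAd (l'.map fun t => poeScrew Y t p) (poeScrew Y i p) with hRdef
    have hfun : (fun p => nestedAd ((a :: l').map fun t => poeScrew Y t p) (poeScrew Y i p))
        = fun p => poeScrew Y a p * R p - R p * poeScrew Y a p := by
      funext p; rw [List.map_cons, nestedAd_cons]
    rw [hfun]
    by_cases h : j ≤ a
    · have hSa := hp_screw_le Y j a h q
      have hcomb := (hSa.mul hR).sub (hR.mul hSa)
      refine hcomb.congr_value ?_
      have h1 : l'.orderedInsert (· ≤ ·) j = j :: l' :=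
        orderedInsert_of_forall_le (fun x hx => le_trans h (hal' x hx))
      have h2 : (a :: l').orderedInsert (· ≤ ·) j = j :: a :: l' := by
        simp [List.orderedInsert, h]
      rw [h1, h2]
      simp only [List.map_cons, nestedAd_cons]
      noncomm_ring
    · have hSa := hp_screw_zero Y j a (le_of_lt (lt_of_not_ge h)) q
      have hcomb := (hSa.mul hR).sub (hR.mul hSa)
      refine hcomb.congr_value ?_
      have h2 : (a :: l').orderedInsert (· ≤ ·) j = a :: l'.orderedInsert (· ≤ ·) j := by
        simp [List.orderedInsert, h]
      rw [h2]
      simp only [List.map_cons, nestedAd_cons]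
      noncomm_ring

lemma hp_nested_ge (i : Fin n) (l : List (Fin n)) (hl : ∀ x ∈ l, x < i) (j : Fin n)
    (hj : i ≤ j) (q : Fin n → ℝ) :
    HP j (fun p => nestedAd (l.map fun t => poeScrew Y t p) (poeScrew Y i p)) q 0 := by
  induction l with
  | nil =>
    simp only [List.map_nil, nestedAd_nil]
    exact hp_screw_zero Y j i hj q
  | cons a l' ih =>
    have hl' : ∀ x ∈ l', x < i := fun x hx => hl x (by simp [hx])
    have hR := ih hl'
    have hSa := hp_screw_zero Y j a (le_trans (le_of_lt (hl a (by simp))) hj) q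
    have hcomb := (hSa.mul hR).sub (hR.mul hSa)
    have hfun : (fun p => nestedAd ((a :: l').map fun t => poeScrew Y t p) (poeScrew Y i p))
        = fun p => poeScrew Y a p
            * (nestedAd (l'.map fun t => poeScrew Y t p) (poeScrew Y i p))
          - (nestedAd (l'.map fun t => poeScrew Y t p) (poeScrew Y i p)) * poeScrew Y a p := by
      funext p; rw [List.map_cons, nestedAd_cons]
    rw [hfun]
    refine hcomb.congr_value ?_
    noncomm_ring

lemma master (i : Fin n) (L : List (Fin n)) (q : Fin n → ℝ) :
    (Matrix.of fun a b =>
        partialDerivSeq L (fun p => poeScrew Y i p a b) q) =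
      if ∀ x ∈ L, x < i
      then nestedAd ((L.insertionSort (· ≤ ·)).map fun t => poeScrew Y t q)
        (poeScrew Y i q)
      else 0 := by
  induction L generalizing q with
  | nil =>
    rw [if_pos (by simp)]
    ext a b
    simp [partialDerivSeq, nestedAd_nil]
  | cons j L ih =>
    by_cases hL : ∀ x ∈ L, x < i
    · have hfun : ∀ p a b, partialDerivSeq L (fun p' => poeScrew Y i p' a b) p
          = (nestedAd ((L.insertionSort (· ≤ ·)).map fun t => poeScrew Y t p)
              (poeScrew Y i p)) a b := by
        intro p a b
        have h := ih p
        rw [if_pos hL] at h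
        exact congrFun (congrFun h a) b
      have hsort := List.pairwise_insertionSort (· ≤ ·) L
      have hmem : ∀ x ∈ L.insertionSort (· ≤ ·), x < i := fun x hx =>
        hL x ((List.mem_insertionSort _).mp hx)
      by_cases hj : j < i
      · rw [if_pos (by intro x hx; rcases List.mem_cons.mp hx with rfl | hx'
                       exacts [hj, hL x hx'])]
        have hp := hp_nested_lt Y i (L.insertionSort (· ≤ ·)) hsort hmem j hj q
        ext a b
        show partialDeriv j (partialDerivSeq L fun p => poeScrew Y i p a b) q = _
        rw [partialDeriv]
        have heq : (fun s => partialDerivSeq L (fun p => poeScrew Y i p a b)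
            (Function.update q j s))
            = fun s => (nestedAd ((L.insertionSort (· ≤ ·)).map fun t => poeScrew Y t
                (Function.update q j s)) (poeScrew Y i (Function.update q j s))) a b := by
          funext s; exact hfun _ a b
        rw [heq, (hp a b).deriv]
        have : (j :: L).insertionSort (· ≤ ·)
            = (L.insertionSort (· ≤ ·)).orderedInsert (· ≤ ·) j := rfl
        rw [this]
      · rw [if_neg (by push_neg; exact ⟨j, by simp, not_lt.mp hj⟩)]
        have hp := hp_nested_ge Y i (L.insertionSort (· ≤ ·)) hmem j (not_lt.mp hj) q
        ext a b
        show partialDeriv j (partialDerivSeq L fun p => poeScrew Y i p a b) q = _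
        rw [partialDeriv]
        have heq : (fun s => partialDerivSeq L (fun p => poeScrew Y i p a b)
            (Function.update q j s))
            = fun s => (nestedAd ((L.insertionSort (· ≤ ·)).map fun t => poeScrew Y t
                (Function.update q j s)) (poeScrew Y i (Function.update q j s))) a b := by
          funext s; exact hfun _ a b
        rw [heq, (hp a b).deriv]
    · rw [if_neg (fun hall => hL fun x hx => hall x (List.mem_cons_of_mem j hx))]
      ext a b
      show partialDeriv j (partialDerivSeq L fun p => poeScrew Y i p a b) q = _
      rw [partialDeriv]
      have heq : (fun s => partialDerivSeq L (fun p => poeScrew Y i p a b)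
          (Function.update q j s)) = fun _ => (0 : ℝ) := by
        funext s
        have h := ih (Function.update q j s)
        rw [if_neg hL] at h
        simpa using congrFun (congrFun h a) b
      rw [heq]
      simp

/-- The iterated partial derivative of the joint screw `Sᵢ` along indices
`α₁,…,α_ν` all `< i` equals the nested Lie brackets
`ad_{S_{β_ν}} ⋯ ad_{S_{β₁}} Sᵢ`, where `β` is the decreasing rearrangement of `α`
(here `β` listed increasingly with the outermost `ad` by the smallest index);
the derivative vanishes whenever some `α_l ≥ i`. -/
theorem poeScrew_iterated_partialDeriv {m n ν : ℕ}
    (Y : Fin n → Matrix (Fin m) (Fin m) ℝ) (i : Fin n)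
    (α : Fin ν → Fin n) (q : Fin n → ℝ) :
    ((∀ l, α l < i) →
      ∀ β : Fin ν → Fin n, Monotone β → (∃ σ : Equiv.Perm (Fin ν), β = α ∘ σ) →
        (Matrix.of fun a b =>
            partialDerivSeq (List.ofFn α) (fun p => poeScrew Y i p a b) q) =
          nestedAd (List.ofFn fun l => poeScrew Y (β l) q) (poeScrew Y i q)) ∧
    ((∃ l, i ≤ α l) →
      (Matrix.of fun a b =>
          partialDerivSeq (List.ofFn α) (fun p => poeScrew Y i p a b) q) = 0) := by
  constructor
  · rintro hall β hmono ⟨σ, hβ⟩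
    rw [master Y i (List.ofFn α) q, if_pos (by
      intro x hx
      obtain ⟨l, rfl⟩ := List.mem_ofFn.mp hx
      exact hall l)]
    have hperm : ((List.ofFn α).insertionSort (· ≤ ·)).Perm (List.ofFn β) := by
      refine (List.perm_insertionSort _ _).trans ?_
      rw [hβ]
      exact (Equiv.Perm.ofFn_comp_perm σ α).symm
    have hsorteq : (List.ofFn α).insertionSort (· ≤ ·) = List.ofFn β :=
      List.Perm.eq_of_pairwise' (List.pairwise_insertionSort _ _)
        (List.sortedLE_ofFn_iff.mpr hmono).pairwise hperm
    rw [hsorteq, List.map_ofFn]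
    rfl
  · rintro ⟨l, hl⟩
    rw [master Y i (List.ofFn α) q, if_neg]
    intro hall
    exact absurd (hall (α l) (List.mem_ofFn.mpr ⟨l, rfl⟩)) (not_lt.mpr hl)

end
end
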